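/- Let $F$ be an imaginary quadratic field with ring of integers $\mathcal{O}$, $\mathfrak{b}$ a fractional ideal, and $H(\mathfrak{b}) = \{\begin{pmatrix}a&b\\c&d\end{pmatrix} \in \mathrm{SL}_2(F) : a,d\in\mathcal{O},\ b\in\mathfrak{b},\ c\in\mathfrak{b}^{-1}\}$. For $(x_1,x_2), (y_1,y_2) \in F\times F$, both nonzero, the following are equivalent: (1) $x_1\mathfrak{b} + x_2\mathcal{O} = y_1\mathfrak{b} + y_2\mathcal{O}$ as fractional ideals; (2) there exists $\sigma \in H(\mathfrak{b})$ such that $(x_1,x_2) = (y_1,y_2)\sigma$. -/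

import Mathlib

open NumberField FractionalIdeal

section Aux

variable {F : Type*} [Field F] [NumberField F]
set_option linter.unusedSectionVars false

set_option linter.unusedSectionVars false in
private lemma FI_add_mem {I : FractionalIdeal (nonZeroDivisors (𝓞 F)) F} {x y : F}
    (hx : x ∈ I) (hy : y ∈ I) : x + y ∈ I := by
  rw [← FractionalIdeal.mem_coe] at *; exact add_mem hx hy

private lemma FI_sub_mem {I : FractionalIdeal (nonZeroDivisors (𝓞 F)) F} {x y : F}
    (hx : x ∈ I) (hy : y ∈ I) : x - y ∈ I := by
  rw [← FractionalIdeal.mem_coe] at *; exact sub_mem hx hy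

private lemma FI_neg_mem {I : FractionalIdeal (nonZeroDivisors (𝓞 F)) F} {x : F}
    (hx : x ∈ I) : -x ∈ I := by
  rw [← FractionalIdeal.mem_coe] at *; exact neg_mem hx

private lemma FI_mem_add {I J : FractionalIdeal (nonZeroDivisors (𝓞 F)) F} {x y : F}
    (hx : x ∈ I) (hy : y ∈ J) : x + y ∈ I + J := by
  rw [← FractionalIdeal.mem_coe, FractionalIdeal.coe_add]
  exact Submodule.add_mem_sup hx hy

private lemma FI_mem_add_elim {I J : FractionalIdeal (nonZeroDivisors (𝓞 F)) F} {z : F}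
    (h : z ∈ I + J) : ∃ u ∈ I, ∃ v ∈ J, u + v = z := by
  rw [← FractionalIdeal.mem_coe, FractionalIdeal.coe_add] at h
  exact Submodule.mem_sup.mp h

private lemma FI_mul_one_mem {z : F} (h : z ∈ (1 : FractionalIdeal (nonZeroDivisors (𝓞 F)) F))
    (y : F) : y * z ∈ spanSingleton (nonZeroDivisors (𝓞 F)) y := by
  obtain ⟨c, hc⟩ := (FractionalIdeal.mem_one_iff _).mp h
  exact (FractionalIdeal.mem_spanSingleton _).mpr ⟨c, by rw [← hc, Algebra.smul_def]; ring⟩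

/-- One inclusion of spans, from a matrix relation. -/
private lemma FI_incl (b : FractionalIdeal (nonZeroDivisors (𝓞 F)) F) (hb : b ≠ 0)
    {x₁ x₂ y₁ y₂ a d b' c : F}
    (ha : a ∈ (1 : FractionalIdeal (nonZeroDivisors (𝓞 F)) F))
    (hd : d ∈ (1 : FractionalIdeal (nonZeroDivisors (𝓞 F)) F))
    (hb' : b' ∈ b) (hc : c ∈ b⁻¹)
    (e1 : x₁ = y₁ * a + y₂ * c) (e2 : x₂ = y₁ * b' + y₂ * d) :
    spanSingleton (nonZeroDivisors (𝓞 F)) x₁ * b + spanSingleton (nonZeroDivisors (𝓞 F)) x₂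
      ≤ spanSingleton (nonZeroDivisors (𝓞 F)) y₁ * b
          + spanSingleton (nonZeroDivisors (𝓞 F)) y₂ := by
  have hinvb : b⁻¹ * b = 1 := by rw [mul_comm]; exact mul_inv_cancel₀ hb
  rw [← sup_eq_add]
  refine sup_le ?_ ?_
  · intro z hz
    obtain ⟨β, hβ, rfl⟩ := mem_singleton_mul.mp hz
    have hrw : x₁ * β = y₁ * (a * β) + y₂ * (c * β) := by rw [e1]; ring
    rw [hrw]
    have m1 : y₁ * (a * β) ∈ spanSingleton (nonZeroDivisors (𝓞 F)) y₁ * b := by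
      refine mul_mem_mul (mem_spanSingleton_self _ _) ?_
      have := mul_mem_mul ha hβ; rwa [one_mul] at this
    have m2 : y₂ * (c * β) ∈ spanSingleton (nonZeroDivisors (𝓞 F)) y₂ := by
      refine FI_mul_one_mem ?_ _
      have := mul_mem_mul hc hβ; rwa [hinvb] at this
    exact FI_mem_add m1 m2
  · rw [spanSingleton_le_iff_mem, e2]
    exact FI_mem_add (mul_mem_mul (mem_spanSingleton_self _ _) hb') (FI_mul_one_mem hd _)

end Aux

/-- Let `F` be an imaginary quadratic field, `𝔟` a fractional ideal and
`H(𝔟) = {(a b; c d) ∈ SL₂(F) : a,d ∈ 𝒪, b ∈ 𝔟, c ∈ 𝔟⁻¹}`.  For nonzero row vectors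
`(x₁,x₂), (y₁,y₂) ∈ F²` the following are equivalent: `x₁𝔟 + x₂𝒪 = y₁𝔟 + y₂𝒪` as
fractional ideals, iff `(x₁,x₂) = (y₁,y₂)σ` for some `σ ∈ H(𝔟)`. -/
theorem span_eq_iff_related_by_H
    (F : Type*) [Field F] [NumberField F]
    (h2 : Module.finrank ℚ F = 2) (him : IsEmpty (F →+* ℝ))
    (b : FractionalIdeal (nonZeroDivisors (𝓞 F)) F) (hb : b ≠ 0)
    (x₁ x₂ y₁ y₂ : F) (hx : ¬(x₁ = 0 ∧ x₂ = 0)) (hy : ¬(y₁ = 0 ∧ y₂ = 0)) :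
    (spanSingleton (nonZeroDivisors (𝓞 F)) x₁ * b + spanSingleton (nonZeroDivisors (𝓞 F)) x₂
      = spanSingleton (nonZeroDivisors (𝓞 F)) y₁ * b
          + spanSingleton (nonZeroDivisors (𝓞 F)) y₂)
    ↔ ∃ σ : Matrix (Fin 2) (Fin 2) F,
        σ 0 0 ∈ (1 : FractionalIdeal (nonZeroDivisors (𝓞 F)) F) ∧
        σ 1 1 ∈ (1 : FractionalIdeal (nonZeroDivisors (𝓞 F)) F) ∧
        σ 0 1 ∈ b ∧ σ 1 0 ∈ b⁻¹ ∧ σ.det = 1 ∧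
        x₁ = y₁ * σ 0 0 + y₂ * σ 1 0 ∧ x₂ = y₁ * σ 0 1 + y₂ * σ 1 1 := by
  have hbb : b * b⁻¹ = 1 := mul_inv_cancel₀ hb
  constructor
  · -- forward: equal ideals ⇒ matrix exists
    intro hEq
    set X : FractionalIdeal (nonZeroDivisors (𝓞 F)) F :=
      spanSingleton (nonZeroDivisors (𝓞 F)) x₁ * b + spanSingleton (nonZeroDivisors (𝓞 F)) x₂
      with hXdef
    -- X ≠ 0
    have hle1 : spanSingleton (nonZeroDivisors (𝓞 F)) x₁ * b ≤ X := by
      rw [hXdef, ← sup_eq_add]; exact le_sup_left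
    have hle2 : spanSingleton (nonZeroDivisors (𝓞 F)) x₂ ≤ X := by
      rw [hXdef, ← sup_eq_add]; exact le_sup_right
    have hley1 : spanSingleton (nonZeroDivisors (𝓞 F)) y₁ * b ≤ X := by
      rw [hEq, ← sup_eq_add]; exact le_sup_left
    have hley2 : spanSingleton (nonZeroDivisors (𝓞 F)) y₂ ≤ X := by
      rw [hEq, ← sup_eq_add]; exact le_sup_right
    have hXne : X ≠ 0 := by
      rcases not_and_or.mp hx with h | h
      · intro h0
        have := le_trans hle1 (le_of_eq h0)
        exact mul_ne_zero (spanSingleton_ne_zero_iff.mpr h) hb (FractionalIdeal.le_zero_iff.mp this)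
      · intro h0
        have := le_trans hle2 (le_of_eq h0)
        exact (spanSingleton_ne_zero_iff.mpr h) (FractionalIdeal.le_zero_iff.mp this)
    have hXX : X⁻¹ * X = 1 := by rw [mul_comm]; exact mul_inv_cancel₀ hXne
    -- decompose 1 over the x-generators
    have hone : (1 : F) ∈ (1 : FractionalIdeal (nonZeroDivisors (𝓞 F)) F) :=
      (FractionalIdeal.mem_one_iff _).mpr ⟨1, map_one _⟩
    have hxdec : (1 : F) ∈ spanSingleton (nonZeroDivisors (𝓞 F)) x₁ * (X⁻¹ * b)
        + spanSingleton (nonZeroDivisors (𝓞 F)) x₂ * X⁻¹ := by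
      have : X⁻¹ * X = spanSingleton (nonZeroDivisors (𝓞 F)) x₁ * (X⁻¹ * b)
          + spanSingleton (nonZeroDivisors (𝓞 F)) x₂ * X⁻¹ := by
        nth_rewrite 2 [hXdef]; ring
      rw [← this, hXX]; exact hone
    have hydec : (1 : F) ∈ spanSingleton (nonZeroDivisors (𝓞 F)) y₁ * (X⁻¹ * b)
        + spanSingleton (nonZeroDivisors (𝓞 F)) y₂ * X⁻¹ := by
      have : X⁻¹ * X = spanSingleton (nonZeroDivisors (𝓞 F)) y₁ * (X⁻¹ * b)
          + spanSingleton (nonZeroDivisors (𝓞 F)) y₂ * X⁻¹ := by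
        nth_rewrite 2 [hEq]; ring
      rw [← this, hXX]; exact hone
    obtain ⟨u, hu, v, hv, huv⟩ := FI_mem_add_elim hxdec
    obtain ⟨p, hp, rfl⟩ := mem_singleton_mul.mp hu
    obtain ⟨q, hq, rfl⟩ := mem_singleton_mul.mp hv
    have hpq : x₁ * p + x₂ * q = 1 := huv
    obtain ⟨u', hu', v', hv', huv'⟩ := FI_mem_add_elim hydec
    obtain ⟨r, hr, rfl⟩ := mem_singleton_mul.mp hu'
    obtain ⟨s, hs, rfl⟩ := mem_singleton_mul.mp hv'
    have hrs : y₁ * r + y₂ * s = 1 := huv'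
    -- memberships of the coordinates
    have hx₁ : x₁ ∈ X * b⁻¹ := by
      rw [← spanSingleton_le_iff_mem]
      calc spanSingleton (nonZeroDivisors (𝓞 F)) x₁
          = spanSingleton (nonZeroDivisors (𝓞 F)) x₁ * b * b⁻¹ := by
            rw [mul_assoc, hbb, mul_one]
        _ ≤ X * b⁻¹ := by rw [mul_comm _ b⁻¹, mul_comm X b⁻¹]; exact mul_right_mono (a := b⁻¹) hle1
    have hy₁ : y₁ ∈ X * b⁻¹ := by
      rw [← spanSingleton_le_iff_mem]
      calc spanSingleton (nonZeroDivisors (𝓞 F)) y₁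
          = spanSingleton (nonZeroDivisors (𝓞 F)) y₁ * b * b⁻¹ := by
            rw [mul_assoc, hbb, mul_one]
        _ ≤ X * b⁻¹ := by rw [mul_comm _ b⁻¹, mul_comm X b⁻¹]; exact mul_right_mono (a := b⁻¹) hley1
    have hx₂ : x₂ ∈ X := spanSingleton_le_iff_mem.mp hle2
    have hy₂ : y₂ ∈ X := spanSingleton_le_iff_mem.mp hley2
    -- ideal identities
    have id1 : (X⁻¹ * b) * (X * b⁻¹) = 1 := by
      calc (X⁻¹ * b) * (X * b⁻¹) = (X⁻¹ * X) * (b * b⁻¹) := by ring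
        _ = 1 := by rw [hXX, hbb, one_mul]
    have id2 : X * X⁻¹ = 1 := by rw [mul_comm]; exact hXX
    have id3 : (X⁻¹ * b) * X = b := by
      calc (X⁻¹ * b) * X = (X⁻¹ * X) * b := by ring
        _ = b := by rw [hXX, one_mul]
    have id4 : X * (X⁻¹ * b) = b := by rw [mul_comm]; exact id3
    have id5 : X⁻¹ * (X * b⁻¹) = b⁻¹ := by
      calc X⁻¹ * (X * b⁻¹) = (X⁻¹ * X) * b⁻¹ := by ring
        _ = b⁻¹ := by rw [hXX, one_mul]
    have id6 : (X * b⁻¹) * X⁻¹ = b⁻¹ := by rw [mul_comm]; exact id5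
    -- entry memberships
    have m00 : r * x₁ + y₂ * q ∈ (1 : FractionalIdeal (nonZeroDivisors (𝓞 F)) F) := by
      refine FI_add_mem ?_ ?_
      · have := mul_mem_mul hr hx₁; rwa [id1] at this
      · have := mul_mem_mul hy₂ hq; rwa [id2] at this
    have m11 : s * x₂ + y₁ * p ∈ (1 : FractionalIdeal (nonZeroDivisors (𝓞 F)) F) := by
      refine FI_add_mem ?_ ?_
      · have := mul_mem_mul hs hx₂; rwa [hXX] at this
      · have := mul_mem_mul hy₁ hp; rwa [show (X * b⁻¹) * (X⁻¹ * b) = 1 by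
          rw [mul_comm]; exact id1] at this
    have m01 : r * x₂ - y₂ * p ∈ b := by
      refine FI_sub_mem ?_ ?_
      · have := mul_mem_mul hr hx₂; rwa [id3] at this
      · have := mul_mem_mul hy₂ hp; rwa [id4] at this
    have m10 : s * x₁ - y₁ * q ∈ b⁻¹ := by
      refine FI_sub_mem ?_ ?_
      · have := mul_mem_mul hs hx₁; rwa [id5] at this
      · have := mul_mem_mul hy₁ hq; rwa [id6] at this
    refine ⟨!![r * x₁ + y₂ * q, r * x₂ - y₂ * p; s * x₁ - y₁ * q, s * x₂ + y₁ * p],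
      ?_, ?_, ?_, ?_, ?_, ?_, ?_⟩
    · simpa using m00
    · simpa using m11
    · simpa using m01
    · simpa using m10
    · rw [Matrix.det_fin_two_of]; linear_combination (y₁ * r + y₂ * s) * hpq + hrs
    · show x₁ = y₁ * (r * x₁ + y₂ * q) + y₂ * (s * x₁ - y₁ * q)
      linear_combination (-x₁) * hrs
    · show x₂ = y₁ * (r * x₂ - y₂ * p) + y₂ * (s * x₂ + y₁ * p)
      linear_combination (-x₂) * hrs
  · -- backward: matrix relation ⇒ equal ideals
    rintro ⟨σ, ha, hd, hb', hc, hdet, e1, e2⟩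
    rw [Matrix.det_fin_two] at hdet
    refine le_antisymm ?_ ?_
    · exact FI_incl b hb ha hd hb' hc e1 e2
    · refine FI_incl b hb hd ha (FI_neg_mem hb') (FI_neg_mem hc) ?_ ?_
      · linear_combination (-(σ 1 1)) * e1 + (σ 1 0) * e2 + (-y₁) * hdet
      · linear_combination (σ 0 1) * e1 + (-(σ 0 0)) * e2 + (-y₂) * hdet
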